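/- For n = 3k+2, the maximal order of an abelian subgroup of the symmetric group S_n is 2·3^k, and any abelian subgroup attaining this order is isomorphic to (Z/3)^k × (Z/2). -/

import Mathlib

set_option maxHeartbeats 1000000
set_option linter.unusedSectionVars false

open Equiv

/-- A transitive abelian subgroup of a permutation group is regular. -/
lemma card_transitive_abelian {γ : Type*} [Finite γ] (b : γ)
    (H : Subgroup (Perm γ)) (hc : ∀ x y : H, x * y = y * x)
    (ht : ∀ x y : γ, ∃ h ∈ H, h x = y) : Nat.card H = Nat.card γ := by
  have hbij : Function.Bijective (fun h : H => (h : Perm γ) b) := by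
    constructor
    · intro h₁ h₂ hh
      simp only at hh
      have key : ∀ y : γ, (h₁ : Perm γ) y = (h₂ : Perm γ) y := by
        intro y
        obtain ⟨σ, hσ, rfl⟩ := ht b y
        have c1 : (h₁ : Perm γ) * σ = σ * (h₁ : Perm γ) := by
          have := congrArg (Subtype.val) (hc h₁ ⟨σ, hσ⟩)
          simpa using this
        have c2 : (h₂ : Perm γ) * σ = σ * (h₂ : Perm γ) := by
          have := congrArg (Subtype.val) (hc h₂ ⟨σ, hσ⟩)
          simpa using this
        calc (h₁ : Perm γ) (σ b) = ((h₁ : Perm γ) * σ) b := rfl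
          _ = (σ * (h₁ : Perm γ)) b := by rw [c1]
          _ = σ ((h₁ : Perm γ) b) := rfl
          _ = σ ((h₂ : Perm γ) b) := by rw [hh]
          _ = ((h₂ : Perm γ) * σ) b := by rw [c2]; rfl
          _ = (h₂ : Perm γ) (σ b) := rfl
      exact Subtype.ext (Equiv.ext key)
    · intro y
      obtain ⟨σ, hσ, h⟩ := ht b y
      exact ⟨⟨σ, hσ⟩, h⟩
  exact Nat.card_eq_of_bijective _ hbij

section OrbitStuff

variable {β : Type} [Fintype β] (M : Subgroup (Perm β)) (a : β)

def orbitSet : Set β := {x | ∃ g ∈ M, g a = x}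

lemma self_mem_orbitSet : a ∈ orbitSet M a := ⟨1, M.one_mem, rfl⟩

lemma orbit_inv {g : Perm β} (hg : g ∈ M) (x : β) :
    x ∈ orbitSet M a ↔ g x ∈ orbitSet M a := by
  constructor
  · rintro ⟨h, hh, rfl⟩
    exact ⟨g * h, M.mul_mem hg hh, rfl⟩
  · rintro ⟨h, hh, hx⟩
    exact ⟨g⁻¹ * h, M.mul_mem (M.inv_mem hg) hh, by simp [Perm.mul_apply, hx]⟩

/-- Restriction of `M` to the orbit of `a`. -/
def phiO : M →* Perm ↥(orbitSet M a) :=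
  MonoidHom.mk' (fun g => Perm.subtypePerm (g : Perm β) (fun x => (orbit_inv M a g.2 x).symm))
    (fun g h => by
      ext x
      simp [Perm.subtypePerm_apply, Perm.mul_apply]; rfl)

/-- Restriction of `M` to the complement of the orbit of `a`. -/
def phiC : M →* Perm ↥(orbitSet M a)ᶜ :=
  MonoidHom.mk' (fun g => Perm.subtypePerm (g : Perm β)
      (fun x => not_congr (orbit_inv M a g.2 x).symm))
    (fun g h => by
      ext x
      simp [Perm.subtypePerm_apply, Perm.mul_apply]; rfl)

lemma phi_pair_injective :
    Function.Injective ((phiO M a).prod (phiC M a)) := by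
  intro g h hgh
  rw [Prod.ext_iff] at hgh
  obtain ⟨h1, h2⟩ := hgh
  apply Subtype.ext
  apply Equiv.ext
  intro x
  by_cases hx : x ∈ orbitSet M a
  · have := congrArg Subtype.val (Equiv.ext_iff.1 h1 ⟨x, hx⟩)
    simpa [phiO, Perm.subtypePerm_apply] using this
  · have := congrArg Subtype.val (Equiv.ext_iff.1 h2 ⟨x, hx⟩)
    simpa [phiC, Perm.subtypePerm_apply] using this

lemma phiO_range_transitive :
    ∀ x y : ↥(orbitSet M a), ∃ h ∈ (phiO M a).range, h x = y := by
  rintro ⟨x, gx, hgx, hx⟩ ⟨y, gy, hgy, hy⟩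
  refine ⟨phiO M a ⟨gy * gx⁻¹, M.mul_mem hgy (M.inv_mem hgx)⟩, ⟨_, rfl⟩, ?_⟩
  apply Subtype.ext
  simp only [phiO, MonoidHom.mk'_apply, Perm.subtypePerm_apply, Perm.mul_apply]
  have : gx⁻¹ x = a := by rw [← hx]; simp
  rw [this, hy]

lemma range_comm {G H : Type*} [Group G] [Group H] (f : G →* H)
    (hc : ∀ x y : G, x * y = y * x) : ∀ x y : f.range, x * y = y * x := by
  rintro ⟨x, gx, rfl⟩ ⟨y, gy, rfl⟩
  apply Subtype.ext
  simp only [Subgroup.coe_mul]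
  rw [← map_mul, ← map_mul, hc]

end OrbitStuff

/-- Maximal product of a partition of `n`. -/
def gb : ℕ → ℕ := fun n =>
  if n % 3 = 0 then 3 ^ (n / 3)
  else if n % 3 = 1 then (if n / 3 = 0 then 1 else 4 * 3 ^ (n / 3 - 1))
  else 2 * 3 ^ (n / 3)

lemma gb_zero : gb 0 = 1 := by simp [gb]
lemma gb_mul3 (p : ℕ) : gb (3 * p) = 3 ^ p := by
  have h1 : (3 * p) % 3 = 0 := by omega
  have h2 : (3 * p) / 3 = p := by omega
  simp [gb, h1, h2]
lemma gb_mul3one (p : ℕ) : gb (3 * p + 1) = if p = 0 then 1 else 4 * 3 ^ (p - 1) := by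
  have h1 : (3 * p + 1) % 3 = 1 := by omega
  have h2 : (3 * p + 1) / 3 = p := by omega
  simp [gb, h1, h2]
lemma gb_mul3two (p : ℕ) : gb (3 * p + 2) = 2 * 3 ^ p := by
  have h1 : (3 * p + 2) % 3 = 2 := by omega
  have h2 : (3 * p + 2) / 3 = p := by omega
  simp [gb, h1, h2]

lemma three_mul_le_pow (j : ℕ) (h : 1 ≤ j) : 3 * j ≤ 3 ^ j := by
  induction j with
  | zero => omega
  | succ n ih =>
    rcases Nat.eq_or_lt_of_le h with h' | h'
    · simp [← h']
    · have h3 : 3 ≤ 3 ^ n := by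
        calc 3 ≤ 3 * n := by omega
        _ ≤ 3 ^ n := ih (by omega)
      have := ih (by omega)
      rw [pow_succ]
      omega

lemma three_mul_lt_pow (j : ℕ) (h : 2 ≤ j) : 3 * j < 3 ^ j := by
  induction j with
  | zero => omega
  | succ n ih =>
    rcases Nat.eq_or_lt_of_le h with h' | h'
    · rw [← h']; norm_num
    · have := ih (by omega)
      have h3 : 3 ≤ 3 ^ n := by
        calc 3 ≤ 3 * n := by omega
        _ ≤ 3 ^ n := three_mul_le_pow n (by omega)
      rw [pow_succ]; omega

lemma pow3_odd (p : ℕ) : 3 ^ p % 2 = 1 := by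
  simp [Nat.pow_mod]

/-- (A): `m ≤ gb m` for `m ≥ 1`. -/
lemma le_gb (m : ℕ) : m ≤ gb m := by
  obtain ⟨p, r, hr, rfl⟩ : ∃ p r, r < 3 ∧ m = 3 * p + r := ⟨m / 3, m % 3, by omega, by omega⟩
  interval_cases r
  · rcases Nat.eq_zero_or_pos p with rfl | hp
    · simp [gb_zero]
    · rw [Nat.add_zero, gb_mul3]; exact three_mul_le_pow p hp
  · rw [gb_mul3one]
    rcases Nat.eq_zero_or_pos p with rfl | hp
    · simp
    · simp only [if_neg (by omega : p ≠ 0)]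
      obtain ⟨q, rfl⟩ : ∃ q, p = q + 1 := ⟨p - 1, by omega⟩
      simp only [Nat.add_sub_cancel]
      rcases Nat.eq_zero_or_pos q with rfl | hq
      · norm_num
      · have := three_mul_le_pow q hq
        have h9 : 9 ≤ 4 * 3 ^ q := by nlinarith [Nat.one_le_two_pow (n := q) ]
        omega
  · rw [gb_mul3two]
    rcases Nat.eq_zero_or_pos p with rfl | hp
    · simp
    · have := three_mul_le_pow p hp
      have : 3 ^ p ≥ 3 := by omega
      omega

/-- (B): supermultiplicativity of `gb`. -/
lemma gb_super (a b : ℕ) : gb a * gb b ≤ gb (a + b) := by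
  obtain ⟨p, r, hr, rfl⟩ : ∃ p r, r < 3 ∧ a = 3 * p + r := ⟨a / 3, a % 3, by omega, by omega⟩
  obtain ⟨q, s, hs, rfl⟩ : ∃ q s, s < 3 ∧ b = 3 * q + s := ⟨b / 3, b % 3, by omega, by omega⟩
  interval_cases r <;> interval_cases s
  · -- (0,0)
    have e : 3 * p + 0 + (3 * q + 0) = 3 * (p + q) := by ring
    rw [e, Nat.add_zero, Nat.add_zero, gb_mul3, gb_mul3, gb_mul3, ← pow_add]
  · -- (0,1)
    have e : 3 * p + 0 + (3 * q + 1) = 3 * (p + q) + 1 := by ring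
    rw [e, Nat.add_zero, gb_mul3, gb_mul3one, gb_mul3one]
    rcases Nat.eq_zero_or_pos q with rfl | hq
    · rcases Nat.eq_zero_or_pos p with rfl | hp
      · simp
      · rw [if_pos rfl, if_neg (by omega : ¬ p + 0 = 0)]
        obtain ⟨p', rfl⟩ : ∃ p', p = p' + 1 := ⟨p - 1, by omega⟩
        simp only [Nat.add_zero, Nat.add_sub_cancel, Nat.mul_one]
        rw [pow_succ']
        have hx : (0:ℕ) < 3 ^ p' := by positivity
        nlinarith [hx]
    · rw [if_neg (by omega : ¬ q = 0), if_neg (by omega : ¬ p + q = 0)]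
      obtain ⟨q', rfl⟩ : ∃ q', q = q' + 1 := ⟨q - 1, by omega⟩
      have e2 : p + (q' + 1) - 1 = p + q' := by omega
      rw [e2, Nat.add_sub_cancel, ← mul_assoc, mul_comm (3 ^ p) 4, mul_assoc, ← pow_add]
  · -- (0,2)
    have e : 3 * p + 0 + (3 * q + 2) = 3 * (p + q) + 2 := by ring
    rw [e, Nat.add_zero, gb_mul3, gb_mul3two, gb_mul3two, ← mul_assoc, mul_comm (3 ^ p) 2,
      mul_assoc, ← pow_add]
  · -- (1,0)
    simp only [Nat.add_zero]
    have e : 3 * p + 1 + 3 * q = 3 * (p + q) + 1 := by ring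
    rw [e, gb_mul3one, gb_mul3, gb_mul3one]
    rcases Nat.eq_zero_or_pos p with rfl | hp
    · rcases Nat.eq_zero_or_pos q with rfl | hq
      · simp
      · rw [if_pos rfl, if_neg (by omega : ¬ 0 + q = 0), Nat.one_mul, Nat.zero_add]
        obtain ⟨q', rfl⟩ : ∃ q', q = q' + 1 := ⟨q - 1, by omega⟩
        simp only [Nat.add_sub_cancel]
        rw [pow_succ']
        have hx : (0:ℕ) < 3 ^ q' := by positivity
        nlinarith [hx]
    · rw [if_neg (by omega : ¬ p = 0), if_neg (by omega : ¬ p + q = 0)]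
      obtain ⟨p', rfl⟩ : ∃ p', p = p' + 1 := ⟨p - 1, by omega⟩
      have e2 : p' + 1 + q - 1 = p' + q := by omega
      rw [e2, Nat.add_sub_cancel, mul_assoc, ← pow_add]
  · -- (1,1)
    have e : 3 * p + 1 + (3 * q + 1) = 3 * (p + q) + 2 := by ring
    rw [e, gb_mul3one, gb_mul3one, gb_mul3two]
    rcases Nat.eq_zero_or_pos p with rfl | hp <;> rcases Nat.eq_zero_or_pos q with rfl | hq
    · simp
    · rw [if_pos rfl, if_neg (by omega : ¬ q = 0), Nat.one_mul, Nat.zero_add]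
      obtain ⟨q', rfl⟩ : ∃ q', q = q' + 1 := ⟨q - 1, by omega⟩
      simp only [Nat.add_sub_cancel]
      rw [pow_succ']
      have hx : (0:ℕ) < 3 ^ q' := by positivity
      nlinarith [hx]
    · rw [if_neg (by omega : ¬ p = 0), if_pos rfl, Nat.mul_one, Nat.add_zero]
      obtain ⟨p', rfl⟩ : ∃ p', p = p' + 1 := ⟨p - 1, by omega⟩
      simp only [Nat.add_sub_cancel]
      rw [pow_succ']
      have hx : (0:ℕ) < 3 ^ p' := by positivity
      nlinarith [hx]
    · rw [if_neg (by omega : ¬ p = 0), if_neg (by omega : ¬ q = 0)]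
      obtain ⟨p', rfl⟩ : ∃ p', p = p' + 1 := ⟨p - 1, by omega⟩
      obtain ⟨q', rfl⟩ : ∃ q', q = q' + 1 := ⟨q - 1, by omega⟩
      simp only [Nat.add_sub_cancel]
      have e2 : p' + 1 + (q' + 1) = p' + q' + 2 := by omega
      rw [e2, pow_add, pow_add]
      have hx : (0:ℕ) < 3 ^ p' * 3 ^ q' := by positivity
      nlinarith [hx]
  · -- (1,2)
    have e : 3 * p + 1 + (3 * q + 2) = 3 * (p + q + 1) := by ring
    rw [e, gb_mul3one, gb_mul3two, gb_mul3]
    rcases Nat.eq_zero_or_pos p with rfl | hp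
    · rw [if_pos rfl, Nat.one_mul, Nat.zero_add]
      rw [pow_succ']
      have hx : (0:ℕ) < 3 ^ q := by positivity
      nlinarith [hx]
    · rw [if_neg (by omega : ¬ p = 0)]
      obtain ⟨p', rfl⟩ : ∃ p', p = p' + 1 := ⟨p - 1, by omega⟩
      simp only [Nat.add_sub_cancel]
      have e2 : p' + 1 + q + 1 = p' + q + 2 := by omega
      rw [e2, pow_add, pow_add]
      have hx : (0:ℕ) < 3 ^ p' * 3 ^ q := by positivity
      nlinarith [hx]
  · -- (2,0)
    simp only [Nat.add_zero]
    have e : 3 * p + 2 + 3 * q = 3 * (p + q) + 2 := by ring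
    rw [e, gb_mul3two, gb_mul3, gb_mul3two, mul_assoc, ← pow_add]
  · -- (2,1)
    have e : 3 * p + 2 + (3 * q + 1) = 3 * (p + q + 1) := by ring
    rw [e, gb_mul3two, gb_mul3one, gb_mul3]
    rcases Nat.eq_zero_or_pos q with rfl | hq
    · rw [if_pos rfl, Nat.mul_one, Nat.add_zero, pow_succ]
      have hx : (0:ℕ) < 3 ^ p := by positivity
      nlinarith [hx]
    · rw [if_neg (by omega : ¬ q = 0)]
      obtain ⟨q', rfl⟩ : ∃ q', q = q' + 1 := ⟨q - 1, by omega⟩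
      simp only [Nat.add_sub_cancel]
      have e2 : p + (q' + 1) + 1 = p + q' + 2 := by omega
      rw [e2, pow_add, pow_add]
      have hx : (0:ℕ) < 3 ^ p * 3 ^ q' := by positivity
      nlinarith [hx]
  · -- (2,2)
    have e : 3 * p + 2 + (3 * q + 2) = 3 * (p + q + 1) + 1 := by ring
    rw [e, gb_mul3two, gb_mul3two, gb_mul3one]
    rw [if_neg (by omega : ¬ p + q + 1 = 0), Nat.add_sub_cancel, pow_add]
    have hx : (0:ℕ) < 3 ^ p * 3 ^ q := by positivity
    nlinarith [hx]

lemma gb_one : gb 1 = 1 := by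
  have := gb_mul3one 0; simpa using this

/-- Which orbit sizes can achieve equality, `n ≡ 2 [MOD 3]` case. -/
lemma sol2 (k m : ℕ) (h1 : 1 ≤ m) (hm : m ≤ 3 * k + 2)
    (he : m * gb (3 * k + 2 - m) = 2 * 3 ^ k) : m = 2 ∨ (m = 3 ∧ 1 ≤ k) := by
  obtain ⟨p, r, hr, rfl⟩ : ∃ p r, r < 3 ∧ m = 3 * p + r := ⟨m / 3, m % 3, by omega, by omega⟩
  interval_cases r
  · have hp : 1 ≤ p := by omega
    have hpk : p ≤ k := by omega
    have e : 3 * k + 2 - (3 * p + 0) = 3 * (k - p) + 2 := by omega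
    rw [e, gb_mul3two] at he
    have e3 : (3:ℕ) ^ k = 3 ^ p * 3 ^ (k - p) := by rw [← pow_add]; congr 1; omega
    rw [e3] at he
    have hpos : 0 < 2 * 3 ^ (k - p) := by positivity
    have h2 : (3 * p) * (2 * 3 ^ (k - p)) = (3 ^ p) * (2 * 3 ^ (k - p)) := by
      ring_nf; ring_nf at he; linarith
    have hc : 3 * p = 3 ^ p := Nat.eq_of_mul_eq_mul_right hpos h2
    have : p = 1 := by
      by_contra h
      have := three_mul_lt_pow p (by omega)
      omega
    right; omega
  · rcases Nat.lt_or_ge p k with hpk | hpk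
    · have e : 3 * k + 2 - (3 * p + 1) = 3 * (k - p) + 1 := by omega
      rw [e, gb_mul3one, if_neg (by omega : ¬ k - p = 0)] at he
      have e3 : (3:ℕ) ^ k = 3 ^ (p + 1) * 3 ^ (k - p - 1) := by rw [← pow_add]; congr 1; omega
      have e4 : k - p - 1 = k - p - 1 := rfl
      have e5 : (4 : ℕ) * 3 ^ (k - p - 1) = 4 * 3 ^ (k - p - 1) := rfl
      rw [e3] at he
      have hpos : 0 < 3 ^ (k - p - 1) := by positivity
      have h2 : ((3 * p + 1) * 4) * 3 ^ (k - p - 1) = (2 * 3 ^ (p + 1)) * 3 ^ (k - p - 1) := by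
        ring_nf; ring_nf at he; linarith
      exfalso
      have hc : (3 * p + 1) * 4 = 2 * 3 ^ (p + 1) := Nat.eq_of_mul_eq_mul_right hpos h2
      have hodd := pow3_odd (p + 1)
      omega
    · -- p ≥ k; m = 3p+1 ≤ 3k+2 forces p = k
      have hpk' : p = k := by omega
      subst hpk'
      have e : 3 * p + 2 - (3 * p + 1) = 1 := by omega
      rw [e, gb_one, Nat.mul_one] at he
      exfalso
      rcases Nat.eq_zero_or_pos p with rfl | hp
      · norm_num at he
      · obtain ⟨t, ht⟩ : (3:ℕ) ∣ 3 ^ p := dvd_pow_self 3 (by omega)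
        omega
  · have hpk : p ≤ k := by omega
    have e : 3 * k + 2 - (3 * p + 2) = 3 * (k - p) := by omega
    rw [e, gb_mul3] at he
    have e3 : (3:ℕ) ^ k = 3 ^ p * 3 ^ (k - p) := by rw [← pow_add]; congr 1; omega
    rw [e3] at he
    have hpos : 0 < 3 ^ (k - p) := by positivity
    have h2 : (3 * p + 2) * 3 ^ (k - p) = (2 * 3 ^ p) * 3 ^ (k - p) := by
      ring_nf; ring_nf at he; linarith
    have hc : 3 * p + 2 = 2 * 3 ^ p := Nat.eq_of_mul_eq_mul_right hpos h2
    rcases Nat.eq_zero_or_pos p with rfl | hp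
    · left; omega
    · exfalso
      obtain ⟨t, ht⟩ : (3:ℕ) ∣ 3 ^ p := dvd_pow_self 3 (by omega)
      omega

/-- Which orbit sizes can achieve equality, `n ≡ 0 [MOD 3]` case. -/
lemma sol0 (k m : ℕ) (h1 : 1 ≤ m) (hm : m ≤ 3 * k)
    (he : m * gb (3 * k - m) = 3 ^ k) : m = 3 ∧ 1 ≤ k := by
  obtain ⟨p, r, hr, rfl⟩ : ∃ p r, r < 3 ∧ m = 3 * p + r := ⟨m / 3, m % 3, by omega, by omega⟩
  interval_cases r
  · have hp : 1 ≤ p := by omega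
    have hpk : p ≤ k := by omega
    have e : 3 * k - (3 * p + 0) = 3 * (k - p) := by omega
    rw [e, gb_mul3] at he
    have e3 : (3:ℕ) ^ k = 3 ^ p * 3 ^ (k - p) := by rw [← pow_add]; congr 1; omega
    rw [e3] at he
    have hpos : 0 < 3 ^ (k - p) := by positivity
    have h2 : (3 * p) * 3 ^ (k - p) = (3 ^ p) * 3 ^ (k - p) := by
      ring_nf; ring_nf at he; linarith
    have hc : 3 * p = 3 ^ p := Nat.eq_of_mul_eq_mul_right hpos h2
    have : p = 1 := by
      by_contra h
      have := three_mul_lt_pow p (by omega)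
      omega
    omega
  · have hpk : p + 1 ≤ k := by omega
    have e : 3 * k - (3 * p + 1) = 3 * (k - p - 1) + 2 := by omega
    rw [e, gb_mul3two] at he
    have e3 : (3:ℕ) ^ k = 3 ^ (p + 1) * 3 ^ (k - p - 1) := by rw [← pow_add]; congr 1; omega
    rw [e3] at he
    have hpos : 0 < 3 ^ (k - p - 1) := by positivity
    have h2 : ((3 * p + 1) * 2) * 3 ^ (k - p - 1) = (3 ^ (p + 1)) * 3 ^ (k - p - 1) := by
      ring_nf; ring_nf at he; linarith
    exfalso
    have hc : (3 * p + 1) * 2 = 3 ^ (p + 1) := Nat.eq_of_mul_eq_mul_right hpos h2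
    have hodd := pow3_odd (p + 1)
    omega
  · have hpk : p + 1 ≤ k := by omega
    rcases Nat.lt_or_ge (p + 1) k with hpk2 | hpk2
    · have e : 3 * k - (3 * p + 2) = 3 * (k - p - 1) + 1 := by omega
      rw [e, gb_mul3one, if_neg (by omega : ¬ k - p - 1 = 0)] at he
      have e3 : (3:ℕ) ^ k = 3 ^ (p + 2) * 3 ^ (k - p - 2) := by rw [← pow_add]; congr 1; omega
      rw [e3] at he
      have e4 : k - p - 1 - 1 = k - p - 2 := by omega
      rw [e4] at he
      have hpos : 0 < 3 ^ (k - p - 2) := by positivity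
      have h2 : ((3 * p + 2) * 4) * 3 ^ (k - p - 2) = (3 ^ (p + 2)) * 3 ^ (k - p - 2) := by
        ring_nf; ring_nf at he; linarith
      exfalso
      have hc : (3 * p + 2) * 4 = 3 ^ (p + 2) := Nat.eq_of_mul_eq_mul_right hpos h2
      have hodd := pow3_odd (p + 2)
      omega
    · have hpk3 : p + 1 = k := by omega
      subst hpk3
      have e : 3 * (p + 1) - (3 * p + 2) = 1 := by omega
      rw [e, gb_one, Nat.mul_one] at he
      exfalso
      obtain ⟨t, ht⟩ : (3:ℕ) ∣ 3 ^ (p + 1) := dvd_pow_self 3 (by omega)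
      omega
open Equiv

def trivMulEquiv {G H : Type*} [Group G] [Group H] [Subsingleton G] [Subsingleton H] : G ≃* H where
  toFun _ := 1
  invFun _ := 1
  left_inv _ := Subsingleton.elim _ _
  right_inv _ := Subsingleton.elim _ _
  map_mul' _ _ := (one_mul 1).symm

def piSuccMulEquiv (j : ℕ) (A : Type*) [Monoid A] : (A × (Fin j → A)) ≃* (Fin (j + 1) → A) where
  toFun p := Fin.cons p.1 p.2
  invFun f := (f 0, fun i => f i.succ)
  left_inv p := by simp
  right_inv f := by
    funext i
    refine Fin.cases ?_ ?_ i <;> simp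
  map_mul' p q := by
    funext i
    refine Fin.cases ?_ ?_ i <;> simp

lemma card_mult_zmod (n : ℕ) [NeZero n] : Nat.card (Multiplicative (ZMod n)) = n := by
  simp [Nat.card_eq_fintype_card]

example : Nat.card (Multiplicative (ZMod 2)) = 2 := card_mult_zmod 2
example (k : ℕ) : Nat.card ((Fin k → Multiplicative (ZMod 3)) × Multiplicative (ZMod 2)) = 2 * 3 ^ k := by
  rw [Nat.card_prod, Nat.card_pi]
  simp [card_mult_zmod, mul_comm]

example (n : ℕ) (h : 0 < n) : True := by
  induction n using Nat.strong_induction_on with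
  | _ n IH => trivial

lemma main_bound (n : ℕ) : ∀ (β : Type) [Fintype β], Nat.card β = n →
    ∀ (M : Subgroup (Perm β)), (∀ x y : M, x * y = y * x) →
    Nat.card M ≤ gb n ∧
    (∀ k, n = 3 * k → Nat.card M = 3 ^ k → Nonempty (M ≃* (Fin k → Multiplicative (ZMod 3)))) ∧
    (∀ k, n = 3 * k + 2 → Nat.card M = 2 * 3 ^ k →
      Nonempty (M ≃* ((Fin k → Multiplicative (ZMod 3)) × Multiplicative (ZMod 2)))) := by
  induction n using Nat.strong_induction_on with
  | _ n IH =>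
  intro β _ hβ M hc
  rcases isEmpty_or_nonempty β with hE | hNE
  · have hn0 : n = 0 := by rw [← hβ]; simp [Nat.card_eq_fintype_card]
    have hM : Subsingleton M := ⟨fun x y => Subtype.ext (Subsingleton.elim _ _)⟩
    have hcard : Nat.card M = 1 := Nat.card_eq_one_iff_unique.2 ⟨hM, ⟨1⟩⟩
    subst hn0
    refine ⟨?_, ?_, ?_⟩
    · rw [hcard, gb_zero]
    · intro k hk _
      have hk0 : k = 0 := by omega
      subst hk0
      exact ⟨trivMulEquiv⟩
    · intro k hk; omega
  · obtain ⟨a⟩ := hNE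
    haveI : Nonempty β := ⟨a⟩
    have hn1 : 1 ≤ n := by
      rw [← hβ]
      exact Nat.card_pos
    haveI : Fintype ↥(orbitSet M a) := Fintype.ofFinite _
    haveI : Fintype ↥(orbitSet M a)ᶜ := Fintype.ofFinite _
    set m := Nat.card ↥(orbitSet M a) with hm
    set c := Nat.card ↥(orbitSet M a)ᶜ with hcdef
    have hm1 : 1 ≤ m := by
      have : Nonempty ↥(orbitSet M a) := ⟨⟨a, self_mem_orbitSet M a⟩⟩
      exact Nat.card_pos
    have hsum : m + c = n := by
      rw [hm, hcdef, Nat.card_coe_set_eq, Nat.card_coe_set_eq, ← hβ]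
      exact Set.ncard_add_ncard_compl _
    set Ψ : M →* ↥(phiO M a).range × ↥(phiC M a).range :=
      ((phiO M a).rangeRestrict.prod ((phiC M a).rangeRestrict)) with hΨ
    have hΨinj : Function.Injective Ψ := by
      intro x y hxy
      apply phi_pair_injective M a
      rw [Prod.ext_iff] at hxy
      exact Prod.ext (congrArg Subtype.val hxy.1) (congrArg Subtype.val hxy.2)
    have hr1 : Nat.card (phiO M a).range = m :=
      card_transitive_abelian ⟨a, self_mem_orbitSet M a⟩ _
        (range_comm _ hc) (phiO_range_transitive M a)
    have hclt : c < n := by omega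
    have hIH := IH c hclt ↥(orbitSet M a)ᶜ hcdef.symm (phiC M a).range (range_comm _ hc)
    have hM2 : Nat.card M ≤ m * Nat.card (phiC M a).range := by
      calc Nat.card M ≤ Nat.card (↥(phiO M a).range × ↥(phiC M a).range) :=
            Nat.card_le_card_of_injective Ψ hΨinj
        _ = m * Nat.card (phiC M a).range := by rw [Nat.card_prod, hr1]
    have hM3 : m * Nat.card (phiC M a).range ≤ m * gb c :=
      Nat.mul_le_mul_left _ hIH.1
    have hM4 : m * gb c ≤ gb n := by
      calc m * gb c ≤ gb m * gb c := Nat.mul_le_mul_right _ (le_gb m)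
        _ ≤ gb (m + c) := gb_super m c
        _ = gb n := by rw [hsum]
    have hbound : Nat.card M ≤ gb n := le_trans hM2 (le_trans hM3 hM4)
    refine ⟨hbound, ?_, ?_⟩
    · -- n = 3k, |M| = 3^k
      intro k hk hck
      have hgbn : gb n = 3 ^ k := by rw [hk, gb_mul3]
      have he : m * gb c = 3 ^ k :=
        le_antisymm (hgbn ▸ hM4) (by rw [← hck]; exact le_trans hM2 hM3)
      have hsol := sol0 k m hm1 (by omega) (by rwa [show 3 * k - m = c by omega])
      obtain ⟨hm3, hk1⟩ := hsol
      obtain ⟨j, rfl⟩ : ∃ j, k = j + 1 := ⟨k - 1, by omega⟩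
      have hcval : c = 3 * j := by omega
      have hr2 : Nat.card (phiC M a).range = gb c := by
        have h1 : m * Nat.card (phiC M a).range = m * gb c := by
          refine le_antisymm hM3 ?_
          rw [he, ← hck]
          exact hM2
        exact Nat.eq_of_mul_eq_mul_left (by omega) h1
      have hr2' : Nat.card (phiC M a).range = 3 ^ j := by rw [hr2, hcval, gb_mul3]
      obtain ⟨e₂⟩ := hIH.2.1 j hcval hr2'
      haveI : Fact (Nat.Prime 3) := ⟨by norm_num⟩
      have e₁ : ↥(phiO M a).range ≃* Multiplicative (ZMod 3) :=
        mulEquivOfPrimeCardEq (by rw [hr1, hm3]) (card_mult_zmod 3)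
      have hΨbij : Function.Bijective Ψ := by
        rw [Nat.bijective_iff_injective_and_card]
        refine ⟨hΨinj, ?_⟩
        rw [Nat.card_prod, hr1, hr2, hck, he]
      exact ⟨(MulEquiv.ofBijective Ψ hΨbij).trans
        ((e₁.prodCongr e₂).trans (piSuccMulEquiv j _))⟩
    · -- n = 3k + 2, |M| = 2 * 3^k
      intro k hk hck
      have hgbn : gb n = 2 * 3 ^ k := by rw [hk, gb_mul3two]
      have he : m * gb c = 2 * 3 ^ k :=
        le_antisymm (hgbn ▸ hM4) (by rw [← hck]; exact le_trans hM2 hM3)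
      have hr2 : Nat.card (phiC M a).range = gb c := by
        have h1 : m * Nat.card (phiC M a).range = m * gb c := by
          refine le_antisymm hM3 ?_
          rw [he, ← hck]
          exact hM2
        exact Nat.eq_of_mul_eq_mul_left (by omega) h1
      have hΨbij : Function.Bijective Ψ := by
        rw [Nat.bijective_iff_injective_and_card]
        refine ⟨hΨinj, ?_⟩
        rw [Nat.card_prod, hr1, hr2, hck, he]
      have hsol := sol2 k m hm1 (by omega) (by rwa [show 3 * k + 2 - m = c by omega])
      rcases hsol with hm2 | ⟨hm3, hk1⟩
      · -- orbit of size 2, complement 3k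
        have hcval : c = 3 * k := by omega
        have hr2' : Nat.card (phiC M a).range = 3 ^ k := by rw [hr2, hcval, gb_mul3]
        obtain ⟨e₂⟩ := hIH.2.1 k hcval hr2'
        haveI : Fact (Nat.Prime 2) := ⟨by norm_num⟩
        have e₁ : ↥(phiO M a).range ≃* Multiplicative (ZMod 2) :=
          mulEquivOfPrimeCardEq (by rw [hr1, hm2]) (card_mult_zmod 2)
        exact ⟨(MulEquiv.ofBijective Ψ hΨbij).trans
          ((e₁.prodCongr e₂).trans MulEquiv.prodComm)⟩
      · -- orbit of size 3, complement 3(k-1)+2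
        obtain ⟨j, rfl⟩ : ∃ j, k = j + 1 := ⟨k - 1, by omega⟩
        have hcval : c = 3 * j + 2 := by omega
        have hr2' : Nat.card (phiC M a).range = 2 * 3 ^ j := by rw [hr2, hcval, gb_mul3two]
        obtain ⟨e₂⟩ := hIH.2.2 j hcval hr2'
        haveI : Fact (Nat.Prime 3) := ⟨by norm_num⟩
        have e₁ : ↥(phiO M a).range ≃* Multiplicative (ZMod 3) :=
          mulEquivOfPrimeCardEq (by rw [hr1, hm3]) (card_mult_zmod 3)
        refine ⟨(MulEquiv.ofBijective Ψ hΨbij).trans ((e₁.prodCongr e₂).trans ?_)⟩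
        exact MulEquiv.prodAssoc.symm.trans
          ((piSuccMulEquiv j (Multiplicative (ZMod 3))).prodCongr (MulEquiv.refl _))
open Equiv

def permCongrMulEquiv {α β : Type*} (e : α ≃ β) : Perm α ≃* Perm β :=
  { e.permCongr with
    map_mul' := fun σ τ => by
      ext x
      simp [Equiv.permCongr_apply, Perm.mul_apply] }

def addPerm (k : ℕ) (f : Fin k → ZMod 3) : Perm (Fin k × ZMod 3) where
  toFun p := (p.1, p.2 + f p.1)
  invFun p := (p.1, p.2 - f p.1)
  left_inv p := by simp
  right_inv p := by simp

def psi (k : ℕ) : ((Fin k → Multiplicative (ZMod 3)) × Multiplicative (ZMod 2)) →*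
    Perm ((Fin k × ZMod 3) ⊕ ZMod 2) :=
  MonoidHom.mk' (fun g => Equiv.sumCongr (addPerm k (fun i => (g.1 i).toAdd))
      (Equiv.addRight g.2.toAdd))
    (fun g h => by
      ext x
      rcases x with ⟨i, v⟩ | t
      · simp [addPerm, Perm.mul_apply]
        ring
      · simp [Perm.mul_apply]
        ring)

lemma psi_injective (k : ℕ) : Function.Injective (psi k) := by
  rw [injective_iff_map_eq_one]
  intro g hg
  have h1 : ∀ i : Fin k, (g.1 i).toAdd = 0 := by
    intro i
    have := congrArg (fun σ : Perm ((Fin k × ZMod 3) ⊕ ZMod 2) => σ (Sum.inl (i, 0))) hg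
    simpa [psi, addPerm] using this
  have h2 : (g.2).toAdd = 0 := by
    have := congrArg (fun σ : Perm ((Fin k × ZMod 3) ⊕ ZMod 2) => σ (Sum.inr 0)) hg
    simpa [psi] using this
  have : g = ((fun _ => 1), 1) := by
    ext i
    · exact h1 i
    · exact h2
  rw [this]; rfl

/-- For `n = 3k+2`, the maximal order of an abelian subgroup of `S_n` is `2·3^k`,
and any abelian subgroup attaining this order is isomorphic to `(ℤ/3)^k × ℤ/2`. -/
theorem maximal_abelian_symmetric_three_k_add_two (k n : ℕ) (hn : n = 3 * k + 2) :
    IsGreatest {m : ℕ | ∃ M : Subgroup (Equiv.Perm (Fin n)),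
        (∀ a b : M, a * b = b * a) ∧ Nat.card M = m} (2 * 3 ^ k) ∧
    ∀ M : Subgroup (Equiv.Perm (Fin n)), (∀ a b : M, a * b = b * a) →
      Nat.card M = 2 * 3 ^ k →
      Nonempty (M ≃* ((Fin k → Multiplicative (ZMod 3)) × Multiplicative (ZMod 2))) := by
  have hfin : Nat.card (Fin n) = n := by simp
  have hmain := main_bound n (Fin n) hfin
  constructor
  · constructor
    · -- membership : the witness subgroup
      have hcard : Fintype.card ((Fin k × ZMod 3) ⊕ ZMod 2) = n := by
        simp [hn]
        ring
      let e : ((Fin k × ZMod 3) ⊕ ZMod 2) ≃ Fin n := Fintype.equivFinOfCardEq hcard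
      let F : ((Fin k → Multiplicative (ZMod 3)) × Multiplicative (ZMod 2)) →* Perm (Fin n) :=
        (permCongrMulEquiv e).toMonoidHom.comp (psi k)
      have hFinj : Function.Injective F :=
        (permCongrMulEquiv e).injective.comp (psi_injective k)
      refine ⟨F.range, range_comm F (fun x y => mul_comm x y), ?_⟩
      have : Nat.card F.range =
          Nat.card ((Fin k → Multiplicative (ZMod 3)) × Multiplicative (ZMod 2)) :=
        (Nat.card_congr (MonoidHom.ofInjective hFinj).toEquiv).symm
      rw [this, Nat.card_prod, Nat.card_pi]
      simp [card_mult_zmod, mul_comm]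
    · -- upper bound
      rintro x ⟨M, hcM, rfl⟩
      have := (hmain M hcM).1
      have h2 : gb n = 2 * 3 ^ k := by rw [hn, gb_mul3two]
      rwa [h2] at this
  · intro M hcM hcard
    exact (hmain M hcM).2.2 k hn hcard
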